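/- Let u = x_1^{a_1}···x_n^{a_n} be a monomial of degree d and let L^f(u) = {w monomial of degree d : w ≤_lex u} be the final lexsegment defined by u. Then the ideal I = (L^f(u)) has linear quotients with respect to the ordering of L^f(u) in decreasing order relative to the lexicographic order induced by x_n > x_{n-1} > … > x_1. -/

import Mathlib

open MvPolynomial

/-- Exponent vectors of monomials in `n` variables; index `i` corresponds to the variable
`x_{i+1}`, so that the `toLex` order on exponent vectors is the lexicographic order on
monomials with `x_1 > x_2 > ⋯ > x_n`. -/
abbrev Mon (n : ℕ) := Fin n →₀ ℕ

/-- The degree of a monomial. -/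
def monDeg {n : ℕ} (m : Mon n) : ℕ := ∑ i, m i

/-- The lexsegment `L(u,v)`: monomials of degree `d` with `u ≥_lex w ≥_lex v`. -/
def lexSeg {n : ℕ} (d : ℕ) (u v : Mon n) : Set (Mon n) :=
  {w | monDeg w = d ∧ toLex v ≤ toLex w ∧ toLex w ≤ toLex u}

/-- The monomial ideal generated by a set of monomials. -/
noncomputable def monomialIdeal {n : ℕ} (k : Type*) [Field k] (T : Set (Mon n)) :
    Ideal (MvPolynomial (Fin n) k) :=
  Ideal.span ((fun m => (monomial m (1 : k) : MvPolynomial (Fin n) k)) '' T)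

/-- The order `≺` on monomials of a fixed degree: `w ≺ w'` iff `ν₁(w) < ν₁(w')`, or
`ν₁(w) = ν₁(w')` and `w >_lex w'`. -/
def prec {n : ℕ} [NeZero n] (z w : Mon n) : Prop :=
  z 0 < w 0 ∨ (z 0 = w 0 ∧ toLex w < toLex z)

/-- A set `T` of monomials, totally ordered by a relation `r`, generates an ideal with linear
quotients with respect to `r` if for every `w ∈ T` the colon ideal of the ideal generated by
the earlier monomials `{z ∈ T | r z w}` by `w` is generated by a subset of the variables. -/
noncomputable def hasLinearQuotientsWrt {n : ℕ} (k : Type*) [Field k] (T : Set (Mon n))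
    (r : Mon n → Mon n → Prop) : Prop :=
  ∀ w ∈ T, ∃ V : Set (Fin n),
    Submodule.colon (monomialIdeal k {z ∈ T | r z w})
        (Ideal.span {(monomial w (1 : k) : MvPolynomial (Fin n) k)}) =
      Ideal.span ((fun i => (X i : MvPolynomial (Fin n) k)) '' V)

/-- `max(m)`: the largest index of a variable dividing the monomial `m`. -/
def maxVar {n : ℕ} [NeZero n] (m : Mon n) : Fin n := m.support.max.unbotD 0

/-- The shadow of a set of monomials. -/
def shad {n : ℕ} (T : Set (Mon n)) : Set (Mon n) :=
  {m | ∃ t ∈ T, ∃ i : Fin n, m = t + Finsupp.single i 1}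

/-- A set of monomials is a lexsegment if it is of the form `L(u,v)`. -/
def IsLexSegSet {n : ℕ} (T : Set (Mon n)) : Prop :=
  ∃ (e : ℕ) (u v : Mon n), monDeg u = e ∧ monDeg v = e ∧ toLex v ≤ toLex u ∧ T = lexSeg e u v

/-- A lexsegment is a completely lexsegment if all its iterated shadows are lexsegments. -/
def IsCompletelyLexSeg {n : ℕ} (T : Set (Mon n)) : Prop :=
  ∀ j : ℕ, IsLexSegSet (shad^[j] T)

/-- `set(w)` for `w ∈ L(u,v)`: the set of `s` with `x_s · w ∈ I_{≺ w}`, where `I_{≺ w}` is the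
ideal generated by `{z ∈ L(u,v) | z ≺ w}`. -/
noncomputable def setW {n : ℕ} [NeZero n] (k : Type*) [Field k] (d : ℕ) (u v : Mon n)
    (w : Mon n) : Set (Fin n) :=
  {s | (monomial (w + Finsupp.single s 1) (1 : k) : MvPolynomial (Fin n) k) ∈
    monomialIdeal k {z ∈ lexSeg d u v | prec z w}}

/-- `g` is the value of the decomposition function of `I = (L(u,v))` at the monomial `m`:
`g` is the `≺`-smallest `w' ∈ L(u,v)` such that `m ∈ I_{⪯ w'}`. -/
noncomputable def isDecompOf {n : ℕ} [NeZero n] (k : Type*) [Field k] (d : ℕ) (u v : Mon n)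
    (m : Mon n) (g : Mon n) : Prop :=
  g ∈ lexSeg d u v ∧
  (monomial m (1 : k) : MvPolynomial (Fin n) k) ∈
      monomialIdeal k {z ∈ lexSeg d u v | prec z g ∨ z = g} ∧
  ∀ w' ∈ lexSeg d u v,
    (monomial m (1 : k) : MvPolynomial (Fin n) k) ∈
        monomialIdeal k {z ∈ lexSeg d u v | prec z w' ∨ z = w'} →
      g = w' ∨ prec g w'

/-- Reversing the variables: the `toLex` order on `revMon` exponent vectors is the
lexicographic order induced by `x_n > x_{n-1} > ⋯ > x_1`. -/
def revMon {n : ℕ} (m : Mon n) : Mon n := Finsupp.equivMapDomain Fin.revPerm m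

/-- The depth of `S/I` with respect to the graded maximal ideal `(x_1, …, x_n)`:
the maximal length of an `S/I`-regular sequence of elements of `(x_1, …, x_n)`. -/
noncomputable def ringDepth {n : ℕ} {k : Type*} [Field k]
    (I : Ideal (MvPolynomial (Fin n) k)) : ℕ :=
  sSup {r : ℕ | ∃ rs : List (MvPolynomial (Fin n) k), rs.length = r ∧
    (∀ x ∈ rs, x ∈ Ideal.span (Set.range (X : Fin n → MvPolynomial (Fin n) k))) ∧
    RingTheory.Sequence.IsRegular (MvPolynomial (Fin n) k ⧸ I) rs}

lemma revMon_apply {n : ℕ} (m : Mon n) (i : Fin n) : revMon m i = m i.rev := by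
  simp [revMon, Finsupp.equivMapDomain_apply]

lemma monomial_mem_monomialIdeal {n : ℕ} {k : Type*} [Field k] {T : Set (Mon n)} {m : Mon n} :
    (monomial m (1:k) : MvPolynomial (Fin n) k) ∈ monomialIdeal k T ↔ ∃ t ∈ T, t ≤ m := by
  classical
  rw [monomialIdeal, mem_ideal_span_monomial_image]
  constructor
  · intro h; exact h m (by simp [mem_support_iff])
  · intro h xi hxi
    rw [support_monomial, if_neg one_ne_zero, Finset.mem_singleton] at hxi
    subst hxi; exact h

lemma rev_lt_iff {n : ℕ} {w z : Mon n} :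
    toLex (revMon w) < toLex (revMon z) ↔
      ∃ j : Fin n, (∀ t, j < t → w t = z t) ∧ w j < z j := by
  rw [Finsupp.Lex.lt_iff]
  constructor
  · rintro ⟨i, h1, h2⟩
    refine ⟨i.rev, fun t ht => ?_, ?_⟩
    · have h4 : t.rev < i := by
        have h5 := Fin.rev_lt_rev.mpr ht
        rwa [Fin.rev_rev] at h5
      have h3 := h1 t.rev h4
      simpa [revMon_apply, Fin.rev_rev] using h3
    · simpa [revMon_apply] using h2
  · rintro ⟨j, h1, h2⟩
    refine ⟨j.rev, fun t ht => ?_, ?_⟩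
    · have h4 : j < t.rev := by
        have h5 := Fin.rev_lt_rev.mpr ht
        rwa [Fin.rev_rev] at h5
      have h3 := h1 t.rev h4
      simpa [revMon_apply, Fin.rev_rev] using h3
    · simpa [revMon_apply, Fin.rev_rev] using h2

lemma monDeg_add {n : ℕ} (a b : Mon n) : monDeg (a + b) = monDeg a + monDeg b := by
  simp [monDeg, Finsupp.add_apply, Finset.sum_add_distrib]

lemma monDeg_single {n : ℕ} [NeZero n] (i : Fin n) : monDeg (Finsupp.single i 1 : Mon n) = 1 := by
  simp [monDeg, Finsupp.single_apply]

lemma key {n : ℕ} [NeZero n] {d : ℕ} {u w z m : Mon n}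
    (hwd : monDeg w = d) (hwu : toLex w ≤ toLex u)
    (hzd : monDeg z = d)
    (hzw : toLex (revMon w) < toLex (revMon z)) (hle : z ≤ m + w) :
    ∃ s : Fin n, m s ≠ 0 ∧ ∃ z' : Mon n, monDeg z' = d ∧ toLex z' ≤ toLex u ∧
      toLex (revMon w) < toLex (revMon z') ∧ z' ≤ w + Finsupp.single s 1 := by
  obtain ⟨j, hjh, hjlt⟩ := rev_lt_iff.mp hzw
  have hmj : m j ≠ 0 := by
    have h := Finsupp.le_def.mp hle j
    rw [Finsupp.add_apply] at h
    omega
  have hex : ∃ i, i < j ∧ w i ≠ 0 := by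
    by_contra h
    push_neg at h
    have hlt : monDeg w < monDeg z := by
      apply Finset.sum_lt_sum
      · intro t _
        rcases lt_trichotomy t j with h1 | rfl | h1
        · rw [h t h1]; exact Nat.zero_le _
        · exact hjlt.le
        · rw [hjh t h1]
      · exact ⟨j, Finset.mem_univ j, hjlt⟩
    omega
  obtain ⟨i, hij, hwi⟩ := hex
  have hine : i ≠ j := ne_of_lt hij
  set z' : Mon n := w + Finsupp.single j 1 - Finsupp.single i 1 with hz'
  have hz'app : ∀ t, z' t = (w t + (Finsupp.single j 1 : Mon n) t) - (Finsupp.single i 1 : Mon n) t := by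
    intro t; rw [hz', Finsupp.tsub_apply, Finsupp.add_apply]
  have hz'i : z' i = w i - 1 := by
    rw [hz'app]; simp [Finsupp.single_apply, hine, Ne.symm hine]
  have hz'j : z' j = w j + 1 := by
    rw [hz'app]; simp [Finsupp.single_apply, hine, Ne.symm hine]
  have hz'other : ∀ t, t ≠ i → t ≠ j → z' t = w t := by
    intro t h1 h2
    rw [hz'app]; simp [Finsupp.single_apply, Ne.symm h1, Ne.symm h2]
  refine ⟨j, hmj, z', ?_, ?_, ?_, tsub_le_self⟩
  · have hsle : (Finsupp.single i 1 : Mon n) ≤ w + Finsupp.single j 1 := by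
      rw [Finsupp.le_def]; intro t
      rcases eq_or_ne t i with rfl | h
      · rw [Finsupp.add_apply, Finsupp.single_apply, if_pos rfl]
        have : (Finsupp.single j 1 : Mon n) t = 0 := by
          rw [Finsupp.single_apply, if_neg (Ne.symm hine)]
        omega
      · rw [Finsupp.single_apply, if_neg (Ne.symm h)]; exact Nat.zero_le _
    have heq : z' + Finsupp.single i 1 = w + Finsupp.single j 1 := tsub_add_cancel_of_le hsle
    have hdeg := congrArg monDeg heq
    rw [monDeg_add, monDeg_add, monDeg_single, monDeg_single, hwd] at hdeg
    omega
  · refine le_trans (le_of_lt ?_) hwu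
    rw [Finsupp.Lex.lt_iff]
    refine ⟨i, fun t ht => ?_, ?_⟩
    · exact hz'other t (ne_of_lt ht) (ne_of_lt (lt_trans ht hij))
    · show z' i < w i
      rw [hz'i]; omega
  · rw [rev_lt_iff]
    refine ⟨j, fun t ht => ?_, ?_⟩
    · exact (hz'other t (ne_of_gt (lt_trans hij ht)) (ne_of_gt ht)).symm
    · rw [hz'j]; omega

/-- The ideal generated by a final lexsegment `L^f(u) = {w : w ≤_lex u}` has linear quotients
with respect to the decreasing ordering relative to the lexicographic order induced by
`x_n > x_{n-1} > ⋯ > x_1`. -/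
theorem final_lexsegment_linear_quotients {n : ℕ} [NeZero n] (hn : 2 ≤ n)
    (k : Type*) [Field k] (d : ℕ) (hd : 2 ≤ d) (u : Mon n) (hu : monDeg u = d) :
    hasLinearQuotientsWrt k {w : Mon n | monDeg w = d ∧ toLex w ≤ toLex u}
      (fun z w => toLex (revMon w) < toLex (revMon z)) := by
  intro w hw
  set T : Set (Mon n) := {w : Mon n | monDeg w = d ∧ toLex w ≤ toLex u} with hT
  set E : Set (Mon n) := {z ∈ T | toLex (revMon w) < toLex (revMon z)} with hE
  refine ⟨{s | ∃ z' ∈ E, z' ≤ w + Finsupp.single s 1}, le_antisymm ?_ ?_⟩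
  · intro p hp
    rw [Ideal.mem_colon_span_singleton] at hp
    rw [mem_ideal_span_X_image]
    intro m hm
    have hmem : m + w ∈ (p * monomial w (1:k)).support := by
      rw [mem_support_iff, coeff_mul_monomial, mul_one]
      exact mem_support_iff.mp hm
    rw [monomialIdeal, mem_ideal_span_monomial_image] at hp
    obtain ⟨z, hzE, hz_le⟩ := hp _ hmem
    obtain ⟨hzT, hzw⟩ := hzE
    obtain ⟨s, hms, z', hz'd, hz'u, hz'w, hz'le⟩ := key hw.1 hw.2 hzT.1 hzw hz_le
    exact ⟨s, ⟨z', ⟨⟨hz'd, hz'u⟩, hz'w⟩, hz'le⟩, hms⟩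
  · rw [Ideal.span_le]
    rintro _ ⟨s, hs, rfl⟩
    rw [SetLike.mem_coe, Ideal.mem_colon_span_singleton]
    obtain ⟨z', hz'E, hz'le⟩ := hs
    have hXmul : (X s : MvPolynomial (Fin n) k) * monomial w 1 = monomial (w + Finsupp.single s 1) 1 := by
      rw [X, monomial_mul, one_mul, add_comm]
    rw [hXmul, monomial_mem_monomialIdeal]
    exact ⟨z', hz'E, hz'le⟩
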